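/- Let V be a symmetric positive definite n×n real matrix (n ≥ 1) with diagonal entries σ_i² = V_{ii}, and define v_R = Σ_{i=1}^n (1 − V_{i,-i} V_{-i,-i}^{-1} V_{-i,i} / σ_i²) and the regression effective sample size n_e^R = 1 + ((n−1)/n) v_R. Then 1 ≤ n_e^R ≤ n. Moreover, if V is diagonal (the coordinates are uncorrelated), then v_R = n and n_e^R = n. -/

import Mathlib

/-- `V_{-i,-i}`: the `(n-1)×(n-1)` submatrix of `V` obtained by deleting the
`i`-th row and the `i`-th column. -/
def delMinor {n : ℕ} (V : Matrix (Fin n) (Fin n) ℝ) (i : Fin n) :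
    Matrix {j : Fin n // j ≠ i} {j : Fin n // j ≠ i} ℝ :=
  Matrix.of fun a b => V a.1 b.1

/-- The scalar `V_{i,-i} V_{-i,-i}⁻¹ V_{-i,i}`. -/
noncomputable def schurTerm {n : ℕ} (V : Matrix (Fin n) (Fin n) ℝ) (i : Fin n) : ℝ :=
  dotProduct (fun a : {j : Fin n // j ≠ i} => V i a.1)
    ((delMinor V i)⁻¹.mulVec fun a => V a.1 i)

/-- The total independent signal `v_R = Σ_i (1 - V_{i,-i} V_{-i,-i}⁻¹ V_{-i,i} / σ_i²)`,
where `σ_i² = V i i`. -/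
noncomputable def vR {n : ℕ} (V : Matrix (Fin n) (Fin n) ℝ) : ℝ :=
  ∑ i, (1 - schurTerm V i / V i i)

/-- The regression effective sample size `n_e^R = 1 + ((n-1)/n) v_R`. -/
noncomputable def neR {n : ℕ} (V : Matrix (Fin n) (Fin n) ℝ) : ℝ :=
  1 + (((n : ℝ) - 1) / n) * vR V

section Aux
open Matrix

lemma sum_split {n : ℕ} (i : Fin n) (f : Fin n → ℝ) :
    ∑ j, f j = f i + ∑ a : {j : Fin n // j ≠ i}, f a.1 := by
  rw [Fintype.sum_eq_add_sum_compl i f]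
  congr 1
  exact Finset.sum_subtype _ (fun x => by simp) f

def extVec {n : ℕ} (i : Fin n) (c : ℝ) (x : {j : Fin n // j ≠ i} → ℝ) : Fin n → ℝ :=
  fun j => if h : j = i then c else x ⟨j, h⟩

lemma extVec_self {n : ℕ} (i : Fin n) (c : ℝ) (x : {j : Fin n // j ≠ i} → ℝ) :
    extVec i c x i = c := by simp [extVec]

lemma extVec_ne {n : ℕ} (i : Fin n) (c : ℝ) (x : {j : Fin n // j ≠ i} → ℝ)
    (a : {j : Fin n // j ≠ i}) : extVec i c x a.1 = x a := by
  simp [extVec, a.2]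

lemma quad_extVec {n : ℕ} (V : Matrix (Fin n) (Fin n) ℝ) (i : Fin n) (c : ℝ)
    (x : {j : Fin n // j ≠ i} → ℝ) :
    extVec i c x ⬝ᵥ V *ᵥ extVec i c x =
      c * (c * V i i + ∑ b : {j : Fin n // j ≠ i}, V i b.1 * x b) +
      ∑ a : {j : Fin n // j ≠ i},
        x a * (c * V a.1 i + ∑ b : {j : Fin n // j ≠ i}, V a.1 b.1 * x b) := by
  have hmv : ∀ j : Fin n, (V *ᵥ extVec i c x) j
      = c * V j i + ∑ b : {j : Fin n // j ≠ i}, V j b.1 * x b := by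
    intro j
    show ∑ k, V j k * extVec i c x k = _
    rw [sum_split i]
    simp only [extVec_self, extVec_ne]
    ring_nf
  show ∑ j, extVec i c x j * (V *ᵥ extVec i c x) j = _
  rw [sum_split i]
  simp only [extVec_self, extVec_ne, hmv]

lemma delMinor_posDef {n : ℕ} {V : Matrix (Fin n) (Fin n) ℝ} (hV : V.PosDef) (i : Fin n) :
    (delMinor V i).PosDef := by
  apply Matrix.PosDef.of_dotProduct_mulVec_pos
  · ext a b
    simpa [delMinor, Matrix.conjTranspose_apply] using hV.1.apply a.1 b.1
  · intro x hx
    have hyne : extVec i 0 x ≠ 0 := by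
      obtain ⟨a, ha⟩ := Function.ne_iff.mp hx
      intro h0
      apply ha
      have := congrFun h0 a.1
      simpa [extVec_ne] using this
    have hpos := hV.dotProduct_mulVec_pos hyne
    rw [star_trivial, quad_extVec] at hpos
    simp only [zero_mul, zero_add, mul_zero] at hpos
    rw [star_trivial]
    convert hpos using 1
    rfl

lemma diag_pos {n : ℕ} {V : Matrix (Fin n) (Fin n) ℝ} (hV : V.PosDef) (i : Fin n) :
    0 < V i i := by
  have := hV.dotProduct_mulVec_pos (x := Pi.single i 1) (by
    intro h; have := congrFun h i; simp at this)
  simpa [dotProduct, Matrix.mulVec, Pi.single_apply, Finset.sum_ite_eq,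
    mul_comm] using this

lemma schurTerm_nonneg {n : ℕ} {V : Matrix (Fin n) (Fin n) ℝ} (hVsymm : V.IsSymm)
    (hV : V.PosDef) (i : Fin n) : 0 ≤ schurTerm V i := by
  have hA := delMinor_posDef hV i
  have h := hA.inv.posSemidef.dotProduct_mulVec_nonneg (fun a : {j : Fin n // j ≠ i} => V a.1 i)
  rw [star_trivial] at h
  have hrow : (fun a : {j : Fin n // j ≠ i} => V i a.1) = (fun a => V a.1 i) := by
    funext a
    have := hVsymm.apply a.1 i
    simp at this ⊢
    rw [← this]
  unfold schurTerm
  rw [hrow]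
  exact h

lemma schurTerm_lt {n : ℕ} {V : Matrix (Fin n) (Fin n) ℝ} (hVsymm : V.IsSymm)
    (hV : V.PosDef) (i : Fin n) : schurTerm V i < V i i := by
  have hA := delMinor_posDef hV i
  set w : {j : Fin n // j ≠ i} → ℝ := fun a => V a.1 i with hw
  set u : {j : Fin n // j ≠ i} → ℝ := (delMinor V i)⁻¹ *ᵥ w with hu
  have hAu : (delMinor V i) *ᵥ u = w := by
    rw [hu, Matrix.mulVec_mulVec, Matrix.mul_nonsing_inv _ (isUnit_iff_ne_zero.mpr hA.det_pos.ne'), Matrix.one_mulVec]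
  have hz : extVec i 1 (fun a => -u a) ≠ 0 := by
    intro h0
    have := congrFun h0 i
    simp [extVec_self] at this
  have hpos := hV.dotProduct_mulVec_pos hz
  rw [star_trivial, quad_extVec] at hpos
  have hst : schurTerm V i = ∑ b : {j : Fin n // j ≠ i}, V i b.1 * u b := rfl
  have hrow : ∀ a : {j : Fin n // j ≠ i}, V i a.1 = V a.1 i := by
    intro a
    have := hVsymm.apply a.1 i
    simpa using this
  have hAua : ∀ a : {j : Fin n // j ≠ i},
      ∑ b : {j : Fin n // j ≠ i}, V a.1 b.1 * u b = V a.1 i := by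
    intro a
    have := congrFun hAu a
    simpa [Matrix.mulVec, dotProduct, delMinor, hw] using this
  have : (0:ℝ) < V i i - schurTerm V i := by
    calc (0:ℝ) < _ := hpos
    _ = V i i - schurTerm V i := by
        rw [hst]
        have : ∀ a : {j : Fin n // j ≠ i},
            (-u a) * (1 * V a.1 i + ∑ b : {j : Fin n // j ≠ i}, V a.1 b.1 * (-u b)) = 0 := by
          intro a
          rw [show ∑ b : {j : Fin n // j ≠ i}, V a.1 b.1 * (-u b)
              = -∑ b : {j : Fin n // j ≠ i}, V a.1 b.1 * u b by
            rw [← Finset.sum_neg_distrib]; exact Finset.sum_congr rfl fun b _ => by ring]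
          rw [hAua a]; ring
        rw [Finset.sum_congr rfl fun a _ => this a]
        simp only [Finset.sum_const_zero, add_zero, one_mul]
        rw [show ∑ b : {j : Fin n // j ≠ i}, V i b.1 * (-u b)
            = -∑ b : {j : Fin n // j ≠ i}, V i b.1 * u b by
          rw [← Finset.sum_neg_distrib]; exact Finset.sum_congr rfl fun b _ => by ring]
        ring
  linarith

end Aux

/-- For a symmetric positive definite covariance matrix `V` (`n ≥ 1`), the regression
effective sample size satisfies `1 ≤ n_e^R ≤ n`; moreover if `V` is diagonal (uncorrelated
coordinates) then `v_R = n` and `n_e^R = n`. -/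
theorem neR_mem_Icc {n : ℕ} (hn : 1 ≤ n)
    (V : Matrix (Fin n) (Fin n) ℝ) (hVsymm : V.IsSymm) (hV : V.PosDef) :
    1 ≤ neR V ∧ neR V ≤ n ∧ (V.IsDiag → vR V = n ∧ neR V = n) := by
  have h1n : (1:ℝ) ≤ n := by exact_mod_cast hn
  have hn0 : (0:ℝ) < n := by linarith
  have hterm : ∀ i : Fin n, 0 ≤ 1 - schurTerm V i / V i i ∧ 1 - schurTerm V i / V i i ≤ 1 := by
    intro i
    have h1 := schurTerm_nonneg hVsymm hV i
    have h2 := schurTerm_lt hVsymm hV i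
    have h3 := diag_pos hV i
    constructor
    · have : schurTerm V i / V i i ≤ 1 := (div_le_one h3).mpr h2.le
      linarith
    · have : 0 ≤ schurTerm V i / V i i := div_nonneg h1 h3.le
      linarith
  have hvR0 : 0 ≤ vR V := Finset.sum_nonneg fun i _ => (hterm i).1
  have hvRn : vR V ≤ n := by
    calc vR V ≤ ∑ _i : Fin n, (1:ℝ) := Finset.sum_le_sum fun i _ => (hterm i).2
    _ = n := by simp
  have hc : 0 ≤ ((n:ℝ)-1)/n := div_nonneg (by linarith) hn0.le
  have hcn : ((n:ℝ)-1)/n * n = (n:ℝ)-1 := div_mul_cancel₀ _ hn0.ne'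
  refine ⟨?_, ?_, ?_⟩
  · unfold neR
    nlinarith [mul_nonneg hc hvR0]
  · unfold neR
    have : ((n:ℝ)-1)/n * vR V ≤ ((n:ℝ)-1)/n * n := mul_le_mul_of_nonneg_left hvRn hc
    rw [hcn] at this
    linarith
  · intro hD
    have hs : ∀ i : Fin n, schurTerm V i = 0 := by
      intro i
      unfold schurTerm
      have h0 : (fun a : {j : Fin n // j ≠ i} => V i a.1) = 0 := by
        funext a; exact hD (Ne.symm a.2)
      rw [h0, zero_dotProduct]
    have hvn : vR V = n := by
      unfold vR; simp [hs]
    refine ⟨hvn, ?_⟩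
    unfold neR
    rw [hvn, hcn]
    ring
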